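/- Given integers 1 ≤ r(1) < r(2) < ..., there exist functions t_k : ℕ → {0/2^k, 1/2^k, ..., 2^k/2^k} for k ≥ 1 such that: (i) |t_{k+1}(r) − t_k(r)| ≤ 2/k for all r, k ≥ 1; (ii) |t_k(r+1) − t_k(r)| ≤ 2/k for all r, k ≥ 1; (iii) t_k is nondecreasing in r; (iv) t_k(r) = 0 for all r ≤ r(k); (v) for every k there exists s₀ with t_k(r) = 1 for all r ≥ s₀. -/

import Mathlib

noncomputable def rampf (r : ℕ → ℕ) (j s : ℕ) : ℝ :=
  (min (2 ^ j) (s - r (2 ^ (j + 1))) : ℕ) / 2 ^ j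

noncomputable def tfun (r : ℕ → ℕ) (k s : ℕ) : ℝ :=
  rampf r (Nat.log 2 k) s +
    ((k - 2 ^ Nat.log 2 k : ℕ) / (2 ^ Nat.log 2 k : ℝ)) *
      (rampf r (Nat.log 2 k + 1) s - rampf r (Nat.log 2 k) s)

lemma rampf_nonneg (r : ℕ → ℕ) (j s : ℕ) : 0 ≤ rampf r j s :=
  div_nonneg (Nat.cast_nonneg _) (by positivity)

lemma rampf_le_one (r : ℕ → ℕ) (j s : ℕ) : rampf r j s ≤ 1 := by
  rw [rampf, div_le_one (by positivity)]
  exact_mod_cast min_le_left _ _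

lemma rampf_mono (r : ℕ → ℕ) (j s : ℕ) : rampf r j s ≤ rampf r j (s + 1) := by
  have h : min (2 ^ j) (s - r (2 ^ (j + 1))) ≤ min (2 ^ j) (s + 1 - r (2 ^ (j + 1))) := by
    omega
  have h' : ((min (2 ^ j) (s - r (2 ^ (j + 1))) : ℕ) : ℝ) ≤
      ((min (2 ^ j) (s + 1 - r (2 ^ (j + 1))) : ℕ) : ℝ) := by exact_mod_cast h
  rw [rampf, rampf]
  gcongr


lemma rampf_step (r : ℕ → ℕ) (j s : ℕ) :
    rampf r j (s + 1) ≤ rampf r j s + 1 / 2 ^ j := by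
  have h : min (2 ^ j) (s + 1 - r (2 ^ (j + 1))) ≤ min (2 ^ j) (s - r (2 ^ (j + 1))) + 1 := by
    omega
  rw [rampf, rampf, ← add_div]
  have h' : ((min (2 ^ j) (s + 1 - r (2 ^ (j + 1))) : ℕ) : ℝ) ≤
      ((min (2 ^ j) (s - r (2 ^ (j + 1))) : ℕ) : ℝ) + 1 := by exact_mod_cast h
  gcongr


lemma rampf_eq_zero (r : ℕ → ℕ) (j s : ℕ) (h : s ≤ r (2 ^ (j + 1))) : rampf r j s = 0 := by
  have h2 : s - r (2 ^ (j + 1)) = 0 := by omega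
  simp [rampf, h2]

lemma rampf_eq_one (r : ℕ → ℕ) (j s : ℕ) (h : r (2 ^ (j + 1)) + 2 ^ j ≤ s) : rampf r j s = 1 := by
  rw [rampf]
  have h2 : min (2 ^ j) (s - r (2 ^ (j + 1))) = 2 ^ j := min_eq_left (by omega)
  rw [h2]
  push_cast
  exact div_self (by positivity)

lemma exists_frac (N d k : ℕ) (hN : N ≤ 2 ^ d) (hd : d ≤ k) (x : ℝ) (hx : x = (N : ℝ) / 2 ^ d) :
    ∃ j : ℕ, j ≤ 2 ^ k ∧ x = (j : ℝ) / 2 ^ k := by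
  refine ⟨N * 2 ^ (k - d), ?_, ?_⟩
  · calc N * 2 ^ (k - d) ≤ 2 ^ d * 2 ^ (k - d) := by gcongr
    _ = 2 ^ k := by rw [← pow_add]; congr 1; omega
  · rw [hx]
    have hk : (2:ℝ) ^ k = 2 ^ d * 2 ^ (k - d) := by rw [← pow_add]; congr 1; omega
    rw [hk]
    push_cast
    field_simp

lemma two_mul_le_pow (j : ℕ) (h : 1 ≤ j) : 2 * j ≤ 2 ^ j := by
  induction j with
  | zero => omega
  | succ n ih =>
    rcases Nat.eq_zero_or_pos n with h0 | h0
    · subst h0; norm_num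
    · have h2 : 2 ≤ 2 ^ n := by
        calc 2 = 2 ^ 1 := rfl
        _ ≤ 2 ^ n := Nat.pow_le_pow_right (by norm_num) h0
      have := ih h0
      rw [pow_succ]; omega

theorem stmt18 (r : ℕ → ℕ) (hr : StrictMono r) (hr1 : 1 ≤ r 1) :
    ∃ t : ℕ → ℕ → ℝ,
      (∀ k, 1 ≤ k → ∀ s, ∃ j : ℕ, j ≤ 2 ^ k ∧ t k s = (j : ℝ) / 2 ^ k) ∧
      (∀ k, 1 ≤ k → ∀ s, |t (k + 1) s - t k s| ≤ 2 / (k : ℝ)) ∧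
      (∀ k, 1 ≤ k → ∀ s, |t k (s + 1) - t k s| ≤ 2 / (k : ℝ)) ∧
      (∀ k, 1 ≤ k → ∀ s, t k s ≤ t k (s + 1)) ∧
      (∀ k, 1 ≤ k → ∀ s, s ≤ r k → t k s = 0) ∧
      (∀ k, 1 ≤ k → ∃ s₀, ∀ s, s₀ ≤ s → t k s = 1) := by
  refine ⟨tfun r, ?_, ?_, ?_, ?_, ?_, ?_⟩
  · -- values j/2^k
    intro k hk s
    set j := Nat.log 2 k with hj
    have hjk : 2 ^ j ≤ k := Nat.pow_log_le_self 2 (by omega)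
    have hk2 : k < 2 ^ (j + 1) := Nat.lt_pow_succ_log_self (by norm_num) k
    set m := k - 2 ^ j with hmdef
    have hm : m < 2 ^ j := by
      have : 2 ^ (j + 1) = 2 * 2 ^ j := by ring
      omega
    set a := min (2 ^ j) (s - r (2 ^ (j + 1))) with hadef
    set b := min (2 ^ (j + 1)) (s - r (2 ^ (j + 2))) with hbdef
    have ha : a ≤ 2 ^ j := min_le_left _ _
    have hb : b ≤ 2 ^ (j + 1) := min_le_left _ _
    rcases Nat.eq_zero_or_pos m with hm0 | hm0
    · refine exists_frac a j k ha (le_trans (Nat.lt_two_pow_self (n := j)).le hjk) _ ?_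
      simp only [tfun, ← hj, ← hmdef, hm0, rampf, ← hadef]
      push_cast
      ring
    · have hdk : 2 * j + 1 ≤ k := by
        rcases Nat.eq_zero_or_pos j with hj0 | hj0
        · omega
        · have := two_mul_le_pow j hj0
          omega
      refine exists_frac ((2 ^ j - m) * (2 * a) + m * b) (2 * j + 1) k ?_ hdk _ ?_
      · calc (2 ^ j - m) * (2 * a) + m * b ≤ (2 ^ j - m) * (2 * 2 ^ j) + m * 2 ^ (j + 1) := by
              gcongr
        _ = ((2 ^ j - m) + m) * (2 * 2 ^ j) := by rw [pow_succ]; ring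
        _ = 2 ^ (2 * j + 1) := by
              have : 2 ^ j - m + m = 2 ^ j := by omega
              rw [this, two_mul, pow_add, pow_succ]; ring
      · simp only [tfun, ← hj, ← hmdef, rampf, ← hadef, ← hbdef]
        have hcast : ((2 ^ j - m : ℕ) : ℝ) = 2 ^ j - m := by
          push_cast [Nat.cast_sub hm.le]; ring
        push_cast [hcast]
        field_simp
        ring
  · -- |t (k+1) - t k| ≤ 2/k
    intro k hk s
    set j := Nat.log 2 k with hj
    have hjk : 2 ^ j ≤ k := Nat.pow_log_le_self 2 (by omega)
    have hk2 : k < 2 ^ (j + 1) := Nat.lt_pow_succ_log_self (by norm_num) k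
    have hdiff : tfun r (k + 1) s - tfun r k s =
        (rampf r (j + 1) s - rampf r j s) / 2 ^ j := by
      rcases Nat.lt_or_ge (k + 1) (2 ^ (j + 1)) with hlt | hge
      · have hlog : Nat.log 2 (k + 1) = j :=
          Nat.log_eq_of_pow_le_of_lt_pow (by omega) hlt
        simp only [tfun, ← hj, hlog]
        have h1 : ((k + 1 - 2 ^ j : ℕ) : ℝ) = (k - 2 ^ j : ℕ) + 1 := by
          have : k + 1 - 2 ^ j = (k - 2 ^ j) + 1 := by omega
          rw [this]; push_cast; ring
        rw [h1]
        field_simp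
        ring
      · have hkeq : k + 1 = 2 ^ (j + 1) := by omega
        have hlog : Nat.log 2 (k + 1) = j + 1 := by
          rw [hkeq]; exact Nat.log_pow (by norm_num : (1:ℕ) < 2) (j + 1)
        have hm'' : ((k + 1 - 2 ^ (j + 1) : ℕ) : ℝ) = 0 := by
          have : k + 1 - 2 ^ (j + 1) = 0 := by omega
          rw [this]; norm_num
        have hmval : ((k - 2 ^ j : ℕ) : ℝ) = 2 ^ j - 1 := by
          have : k - 2 ^ j = 2 ^ j - 1 := by
            have : 2 ^ (j + 1) = 2 * 2 ^ j := by ring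
            omega
          rw [this]
          have h1 : 1 ≤ 2 ^ j := Nat.one_le_two_pow
          push_cast [Nat.cast_sub h1]; ring
        simp only [tfun, ← hj, hlog, hm'', hmval, zero_div, zero_mul, add_zero]
        field_simp
        ring
    rw [hdiff]
    have hb1 := rampf_nonneg r j s
    have hb2 := rampf_le_one r j s
    have hb3 := rampf_nonneg r (j + 1) s
    have hb4 := rampf_le_one r (j + 1) s
    have habs : |rampf r (j + 1) s - rampf r j s| ≤ 1 :=
      abs_le.mpr ⟨by linarith, by linarith⟩
    rw [abs_div, abs_of_pos (show (0:ℝ) < 2 ^ j by positivity)]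
    have hkpos : (0:ℝ) < k := by exact_mod_cast hk
    rw [div_le_div_iff₀ (by positivity) hkpos]
    have hk2' : (k : ℝ) ≤ 2 * 2 ^ j := by
      have : (k : ℝ) < 2 ^ (j + 1) := by exact_mod_cast hk2
      rw [pow_succ] at this; linarith
    nlinarith [abs_nonneg (rampf r (j + 1) s - rampf r j s)]
  · -- |t k (s+1) - t k s| ≤ 2/k
    intro k hk s
    set j := Nat.log 2 k with hj
    have hjk : 2 ^ j ≤ k := Nat.pow_log_le_self 2 (by omega)
    have hk2 : k < 2 ^ (j + 1) := Nat.lt_pow_succ_log_self (by norm_num) k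
    set m := k - 2 ^ j with hmdef
    have hm : m ≤ 2 ^ j := by
      have : 2 ^ (j + 1) = 2 * 2 ^ j := by ring
      omega
    have hl0 : (0:ℝ) ≤ (m : ℝ) / 2 ^ j := by positivity
    have hl1 : (m : ℝ) / 2 ^ j ≤ 1 := by
      rw [div_le_one (by positivity)]
      exact_mod_cast hm
    have d1a := rampf_mono r j s
    have d1b := rampf_step r j s
    have d2a := rampf_mono r (j + 1) s
    have d2b := rampf_step r (j + 1) s
    have hhalf : (1:ℝ) / 2 ^ (j + 1) ≤ 1 / 2 ^ j := by
      apply div_le_div_of_nonneg_left one_pos.le (by positivity)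
      exact pow_le_pow_right₀ one_le_two (by omega)
    have key : |tfun r k (s + 1) - tfun r k s| ≤ 1 / 2 ^ j := by
      simp only [tfun, ← hj, ← hmdef]
      rw [abs_le]
      constructor
      · nlinarith
      · nlinarith
    have hkpos : (0:ℝ) < k := by exact_mod_cast hk
    have hk2' : (k : ℝ) ≤ 2 * 2 ^ j := by
      have : (k : ℝ) < 2 ^ (j + 1) := by exact_mod_cast hk2
      rw [pow_succ] at this; linarith
    calc |tfun r k (s + 1) - tfun r k s| ≤ 1 / 2 ^ j := key
    _ ≤ 2 / k := by
        rw [div_le_div_iff₀ (by positivity) hkpos]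
        linarith
  · -- monotone
    intro k hk s
    set j := Nat.log 2 k with hj
    have hjk : 2 ^ j ≤ k := Nat.pow_log_le_self 2 (by omega)
    have hk2 : k < 2 ^ (j + 1) := Nat.lt_pow_succ_log_self (by norm_num) k
    set m := k - 2 ^ j with hmdef
    have hm : m ≤ 2 ^ j := by
      have : 2 ^ (j + 1) = 2 * 2 ^ j := by ring
      omega
    have hl0 : (0:ℝ) ≤ (m : ℝ) / 2 ^ j := by positivity
    have hl1 : (m : ℝ) / 2 ^ j ≤ 1 := by
      rw [div_le_one (by positivity)]
      exact_mod_cast hm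
    have d1a := rampf_mono r j s
    have d2a := rampf_mono r (j + 1) s
    simp only [tfun, ← hj, ← hmdef]
    nlinarith
  · -- zero for s ≤ r k
    intro k hk s hs
    set j := Nat.log 2 k with hj
    have hk2 : k < 2 ^ (j + 1) := Nat.lt_pow_succ_log_self (by norm_num) k
    have h1 : s ≤ r (2 ^ (j + 1)) := le_trans hs (hr.monotone (by omega))
    have h2 : s ≤ r (2 ^ (j + 2)) :=
      le_trans h1 (hr.monotone (Nat.pow_le_pow_right (by norm_num) (by omega)))
    simp only [tfun, ← hj, rampf_eq_zero r j s h1, rampf_eq_zero r (j + 1) s h2]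
    ring
  · -- eventually 1
    intro k hk
    set j := Nat.log 2 k with hj
    refine ⟨r (2 ^ (j + 2)) + 2 ^ (j + 1), fun s hs => ?_⟩
    have h2 : rampf r (j + 1) s = 1 := rampf_eq_one r (j + 1) s hs
    have h1 : rampf r j s = 1 := by
      apply rampf_eq_one
      have hle : r (2 ^ (j + 1)) ≤ r (2 ^ (j + 2)) :=
        hr.monotone (Nat.pow_le_pow_right (by norm_num) (by omega))
      have : (2:ℕ) ^ j ≤ 2 ^ (j + 1) := Nat.pow_le_pow_right (by norm_num) (by omega)
      omega
    simp only [tfun, ← hj, h1, h2]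
    ring
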